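/- arXiv:1008.5379 — 2 statements merged into one kernel-verified Lean document; each statement's English description precedes it below -/
import Mathlib

section
/- For t > 0, the contour integral ∫_γ k e^{-2ik⁴t} dk equals c₁/√t, where c₁ = √π e^{-iπ/4}/(2√2); for t < 0 the same integral equals 0. -/
open Filter MeasureTheory

/-- Truncated contour integral along `γ_R = [R e^{iπ/4}, 0] ∪ [0, R]`. -/
noncomputable def gammaTrunc (f : ℂ → ℂ) (R : ℝ) : ℂ :=
  ∫ r in (0:ℝ)..R,
    (f (r : ℂ) - Complex.exp (Real.pi * Complex.I / 4) *
      f ((r : ℂ) * Complex.exp (Real.pi * Complex.I / 4)))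

/-- The constant `c₁ = √π e^{-iπ/4}/(2√2)`. -/
noncomputable def c1 : ℂ :=
  (Real.sqrt Real.pi : ℂ) * Complex.exp (-(Real.pi : ℂ) * Complex.I / 4) /
    (2 * (Real.sqrt 2 : ℂ))

open Set intervalIntegral Complex
open scoped Real

noncomputable section
namespace FresnelAux

/-- Integrand on the real axis. -/
def FA (a : ℝ) (u : ℝ) : ℂ := Complex.exp (-I * a * u ^ 2)

/-- Integrand on the rotated ray (Gaussian). -/
def FB (a : ℝ) (u : ℝ) : ℂ :=
  Complex.exp (-(π : ℂ) * I / 4) * Complex.exp (-(a : ℂ) * u ^ 2)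

/-- Arc integrand. -/
def FC (a : ℝ) (x : ℝ) (θ : ℝ) : ℂ :=
  Complex.exp (-I * a * x ^ 2 * Complex.exp (2 * θ * I)) *
    (I * x * Complex.exp (θ * I))

/-- derivative in `x` of `FC`. -/
def FC' (a : ℝ) (x : ℝ) (θ : ℝ) : ℂ :=
  Complex.exp (-I * a * x ^ 2 * Complex.exp (2 * θ * I)) *
    ((2 * a * x ^ 2 * Complex.exp (2 * θ * I) + I) * Complex.exp (θ * I))

lemma contFA (a : ℝ) : Continuous (FA a) := by
  unfold FA; fun_prop

lemma contFB (a : ℝ) : Continuous (FB a) := by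
  unfold FB; fun_prop

lemma hasDerivAt_FC (a : ℝ) (θ : ℝ) (x : ℝ) :
    HasDerivAt (fun y : ℝ => FC a y θ) (FC' a x θ) x := by
  have hg : HasDerivAt (fun z : ℂ => Complex.exp (-I * a * z ^ 2 * Complex.exp (2 * θ * I)) *
      (I * z * Complex.exp (θ * I)))
      (Complex.exp (-I * a * (x:ℂ) ^ 2 * Complex.exp (2 * θ * I)) *
        ((2 * a * (x:ℂ) ^ 2 * Complex.exp (2 * θ * I) + I) * Complex.exp (θ * I))) (x : ℂ) := by
    have hsq : HasDerivAt (fun z : ℂ => z ^ 2) (2 * (x:ℂ)) x := by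
      simpa using hasDerivAt_pow 2 (x:ℂ)
    have hbase : HasDerivAt (fun z : ℂ => -I * a * z ^ 2 * Complex.exp (2 * θ * I))
        (-I * a * (2 * (x:ℂ)) * Complex.exp (2 * θ * I)) (x:ℂ) := by
      simpa [mul_comm, mul_assoc, mul_left_comm] using
        ((hsq.const_mul (-I * (a:ℂ))).mul_const (Complex.exp (2 * θ * I)))
    have hexp := hbase.cexp
    have hlin : HasDerivAt (fun z : ℂ => I * z * Complex.exp (θ * I))
        (I * Complex.exp (θ * I)) (x:ℂ) := by
      simpa [mul_comm, mul_assoc, mul_left_comm] using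
        (((hasDerivAt_id (x:ℂ)).const_mul I).mul_const (Complex.exp (θ * I)))
    have := hexp.mul hlin
    refine HasDerivAt.congr_deriv this ?_
    ring_nf
    simp only [Complex.I_sq]
    ring
  exact hg.comp_ofReal

/-- endpoint function for the θ-FTC. -/
def G (a : ℝ) (x : ℝ) (θ : ℝ) : ℂ :=
  Complex.exp (-I * a * x ^ 2 * Complex.exp (2 * θ * I)) * Complex.exp (θ * I)

lemma hasDerivAt_G (a : ℝ) (x : ℝ) (θ : ℝ) :
    HasDerivAt (fun s : ℝ => G a x s) (FC' a x θ) θ := by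
  have hE1 : HasDerivAt (fun s : ℝ => Complex.exp (s * I)) (I * Complex.exp (θ * I)) θ := by
    have h : HasDerivAt (fun z : ℂ => Complex.exp (z * I)) (I * Complex.exp ((θ:ℂ) * I)) (θ:ℂ) := by
      simpa [mul_comm] using ((hasDerivAt_id ((θ:ℂ))).mul_const I).cexp
    exact h.comp_ofReal
  have hE2 : HasDerivAt (fun s : ℝ => Complex.exp (2 * s * I)) (2 * I * Complex.exp (2 * θ * I)) θ := by
    have h : HasDerivAt (fun z : ℂ => Complex.exp (2 * z * I)) (2 * I * Complex.exp (2 * (θ:ℂ) * I)) (θ:ℂ) := by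
      have : HasDerivAt (fun z : ℂ => 2 * z * I) (2 * I) (θ:ℂ) := by
        simpa [mul_comm, mul_assoc] using (((hasDerivAt_id ((θ:ℂ))).const_mul 2).mul_const I)
      simpa [mul_comm] using this.cexp
    exact h.comp_ofReal
  have hbase : HasDerivAt (fun s : ℝ => -I * a * (x:ℂ) ^ 2 * Complex.exp (2 * s * I))
      (-I * a * (x:ℂ) ^ 2 * (2 * I * Complex.exp (2 * θ * I))) θ := by
    have h := hE2.const_mul (-I * (a:ℂ) * (x:ℂ) ^ 2)
    convert h using 1
    all_goals first
      | (funext s; ring)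
      | ring
  have hbase2 := hbase.cexp.mul hE1
  refine HasDerivAt.congr_deriv hbase2 ?_
  unfold FC'
  ring_nf
  simp only [Complex.I_sq]
  ring

lemma contFC' (a x : ℝ) : Continuous (fun θ : ℝ => FC' a x θ) := by
  unfold FC'
  fun_prop

lemma contFC (a x : ℝ) : Continuous (fun θ : ℝ => FC a x θ) := by
  unfold FC
  fun_prop

/-- the three path integrals -/
def lineA (a : ℝ) (R : ℝ) : ℂ := ∫ u in (0:ℝ)..R, FA a u
def lineB (a : ℝ) (R : ℝ) : ℂ := ∫ u in (0:ℝ)..R, FB a u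
def arc (a : ℝ) (R : ℝ) : ℂ := ∫ θ in (-(π/4))..(0:ℝ), FC a R θ

lemma hasDerivAt_arc (a : ℝ) (ha : 0 < a) (x : ℝ) :
    HasDerivAt (fun y => arc a y) (G a x 0 - G a x (-(π/4))) x := by
  have key : HasDerivAt (fun y => arc a y) (∫ θ in (-(π/4))..(0:ℝ), FC' a x θ) x := by
    have hb : IntervalIntegrable (fun θ : ℝ => 2 * a * (|x| + 1) ^ 2 + 1) volume (-(π/4)) 0 :=
      intervalIntegrable_const
    have := intervalIntegral.hasDerivAt_integral_of_dominated_loc_of_deriv_le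
      (F := fun y θ => FC a y θ) (F' := fun y θ => FC' a y θ) (x₀ := x)
      (a := -(π/4)) (b := (0:ℝ)) (bound := fun _ => 2 * a * (|x| + 1) ^ 2 + 1)
      (s := Metric.ball x 1) (Metric.ball_mem_nhds x one_pos)
      (Filter.Eventually.of_forall fun y => ((contFC a y).aestronglyMeasurable))
      ((contFC a x).intervalIntegrable _ _)
      ((contFC' a x).aestronglyMeasurable)
      ?_ hb ?_
    · exact this.2
    · refine Filter.Eventually.of_forall fun θ hθ y hy => ?_
      have hθ0 : θ ≤ 0 := by
        rcases Set.mem_uIoc.1 hθ with h | h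
        · exact h.2
        · nlinarith [h.2, Real.pi_pos]
      have hθ1 : -π ≤ 2 * θ := by
        rcases Set.mem_uIoc.1 hθ with h | h
        · nlinarith [h.1, Real.pi_pos]
        · nlinarith [h.2, Real.pi_pos]
      have hsin : Real.sin (2 * θ) ≤ 0 :=
        Real.sin_nonpos_of_nonpos_of_neg_pi_le (by linarith) hθ1
      have hre : (-I * a * (y:ℂ) ^ 2 * Complex.exp (2 * θ * I)).re
          = a * y ^ 2 * Real.sin (2 * θ) := by
        have key : -I * (a:ℂ) * (y:ℂ) ^ 2 * Complex.exp (2 * θ * I)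
            = ((a * y ^ 2 * Real.sin (2 * θ) : ℝ) : ℂ)
              + ((-(a * y ^ 2 * Real.cos (2 * θ)) : ℝ) : ℂ) * I := by
          rw [show ((2:ℂ) * θ * I) = ((2 * θ : ℝ) : ℂ) * I by push_cast; ring,
            Complex.exp_mul_I, ← Complex.ofReal_cos, ← Complex.ofReal_sin]
          push_cast
          ring_nf
          simp only [Complex.I_sq]
          ring
        rw [key]
        simp only [Complex.add_re, Complex.mul_re, Complex.ofReal_re, Complex.ofReal_im,
          Complex.I_re, Complex.I_im]
        ring
      have hy' : |y| ≤ |x| + 1 := by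
        have h1 : |y| - |x| ≤ |y - x| := abs_sub_abs_le_abs_sub y x
        have h2 : |y - x| < 1 := by
          have := Metric.mem_ball.mp hy
          rwa [Real.dist_eq] at this
        linarith
      have hnorm : ‖FC' a y θ‖
          = Real.exp (a * y ^ 2 * Real.sin (2 * θ)) *
            ‖2 * (a:ℂ) * (y:ℂ) ^ 2 * Complex.exp (2 * θ * I) + I‖ := by
        have hz : ((θ:ℂ) * I).re = 0 := by simp
        unfold FC'
        simp only [norm_mul, Complex.norm_exp, hre, hz, Real.exp_zero,
          mul_one]
      have hb1 : Real.exp (a * y ^ 2 * Real.sin (2 * θ)) ≤ 1 :=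
        Real.exp_le_one_iff.mpr
          (by nlinarith [mul_nonneg (mul_nonneg ha.le (sq_nonneg y)) (neg_nonneg.mpr hsin)])
      have h2 : ‖2 * (a:ℂ) * (y:ℂ) ^ 2 * Complex.exp (2 * θ * I) + I‖ ≤ 2 * a * y ^ 2 + 1 := by
        refine (norm_add_le _ _).trans ?_
        have e1 : ‖2 * (a:ℂ) * (y:ℂ) ^ 2 * Complex.exp (2 * θ * I)‖ = 2 * a * y ^ 2 := by
          rw [norm_mul,
            show (2 * (a:ℂ) * (y:ℂ) ^ 2) = ((2 * a * y ^ 2 : ℝ) : ℂ) by push_cast; ring,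
            show ((2:ℂ) * θ * I) = ((2 * θ : ℝ) : ℂ) * I by push_cast; ring]
          simp only [Complex.norm_real, Real.norm_eq_abs, Complex.norm_exp_ofReal_mul_I,
            mul_one]
          exact abs_of_nonneg (by positivity)
        rw [e1]
        simp
      have hysq : y ^ 2 ≤ (|x| + 1) ^ 2 := by
        nlinarith [_root_.sq_abs y, abs_nonneg y, abs_nonneg x]
      rw [hnorm]
      calc Real.exp (a * y ^ 2 * Real.sin (2 * θ)) *
            ‖2 * (a:ℂ) * (y:ℂ) ^ 2 * Complex.exp (2 * θ * I) + I‖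
          ≤ 1 * (2 * a * y ^ 2 + 1) :=
            mul_le_mul hb1 h2 (norm_nonneg _) one_pos.le
        _ ≤ 2 * a * (|x| + 1) ^ 2 + 1 := by nlinarith
    · refine Filter.Eventually.of_forall fun θ _ y _ => hasDerivAt_FC a θ y
  have ftc : (∫ θ in (-(π/4))..(0:ℝ), FC' a x θ) = G a x 0 - G a x (-(π/4)) :=
    intervalIntegral.integral_eq_sub_of_hasDerivAt
      (fun θ _ => hasDerivAt_G a x θ) ((contFC' a x).intervalIntegrable _ _)
  rwa [ftc] at key

lemma hasDerivAt_lineA (a : ℝ) (x : ℝ) : HasDerivAt (lineA a) (FA a x) x :=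
  intervalIntegral.integral_hasDerivAt_right ((contFA a).intervalIntegrable _ _)
    ((contFA a).stronglyMeasurableAtFilter _ _) (contFA a).continuousAt

lemma hasDerivAt_lineB (a : ℝ) (x : ℝ) : HasDerivAt (lineB a) (FB a x) x :=
  intervalIntegral.integral_hasDerivAt_right ((contFB a).intervalIntegrable _ _)
    ((contFB a).stronglyMeasurableAtFilter _ _) (contFB a).continuousAt

lemma exp_arc_endpoint : Complex.exp (2 * ((-(π/4) : ℝ) : ℂ) * I) = -I := by
  rw [show (2 * ((-(π/4) : ℝ) : ℂ) * I) = ((-(π/2) : ℝ) : ℂ) * I by push_cast; ring,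
    Complex.exp_mul_I, ← Complex.ofReal_cos, ← Complex.ofReal_sin]
  simp [Real.cos_pi_div_two, Real.sin_pi_div_two]

lemma G_zero (a x : ℝ) : G a x 0 = FA a x := by
  unfold G FA
  norm_num

lemma G_endpoint (a x : ℝ) : G a x (-(π/4)) = FB a x := by
  unfold G FB
  rw [show ((2:ℂ) * (((-(π/4):ℝ)):ℂ) * I) = 2 * ((-(π/4) : ℝ) : ℂ) * I by push_cast; ring,
    exp_arc_endpoint,
    show (-I * (a:ℂ) * (x:ℂ) ^ 2 * -I) = -(a:ℂ) * (x:ℂ) ^ 2 by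
      ring_nf; simp only [Complex.I_sq]; ring,
    show (((-(π/4):ℝ)):ℂ) * I = -(π:ℂ) * I / 4 by push_cast; ring]
  ring

lemma lineA_eq (a : ℝ) (ha : 0 < a) (R : ℝ) : lineA a R = lineB a R + arc a R := by
  have hD : ∀ x : ℝ, HasDerivAt (fun y => lineA a y - lineB a y - arc a y) 0 x := by
    intro x
    have h3 := hasDerivAt_arc a ha x
    have h := ((hasDerivAt_lineA a x).sub (hasDerivAt_lineB a x)).sub h3
    rw [G_zero, G_endpoint] at h
    exact h.congr_deriv (by simp)
  have hdiff : Differentiable ℝ (fun y => lineA a y - lineB a y - arc a y) :=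
    fun x => (hD x).differentiableAt
  have hconst := is_const_of_deriv_eq_zero hdiff (fun x => (hD x).deriv) R 0
  have h0A : lineA a 0 = 0 := intervalIntegral.integral_same
  have h0B : lineB a 0 = 0 := intervalIntegral.integral_same
  have h0C : arc a 0 = 0 := by
    unfold arc FC
    simp
  rw [h0A, h0B, h0C] at hconst
  have h := sub_eq_zero.mp (by simpa [sub_sub] using hconst)
  linear_combination h
  
lemma tendsto_lineB (a : ℝ) (ha : 0 < a) :
    Tendsto (lineB a) atTop
      (nhds (Complex.exp (-(π:ℂ) * I / 4) * ((Real.sqrt (π/a) / 2 : ℝ) : ℂ))) := by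
  have hre : Tendsto (fun R : ℝ => ∫ u in (0:ℝ)..R, Real.exp (-a * u ^ 2)) atTop
      (nhds (Real.sqrt (π/a) / 2)) := by
    have hint : IntegrableOn (fun u : ℝ => Real.exp (-a * u ^ 2)) (Set.Ioi 0) :=
      (integrable_exp_neg_mul_sq ha).integrableOn
    have h := intervalIntegral_tendsto_integral_Ioi 0 hint tendsto_id
    rwa [integral_gaussian_Ioi] at h
  have heq : ∀ R : ℝ, lineB a R = Complex.exp (-(π:ℂ) * I / 4) *
      ((∫ u in (0:ℝ)..R, Real.exp (-a * u ^ 2) : ℝ) : ℂ) := by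
    intro R
    unfold lineB FB
    rw [intervalIntegral.integral_const_mul]
    congr 1
    rw [← intervalIntegral.integral_ofReal]
    apply intervalIntegral.integral_congr
    intro u _
    show Complex.exp (-(a:ℂ) * (u:ℂ) ^ 2) = ((Real.exp (-a * u ^ 2) : ℝ) : ℂ)
    rw [Complex.ofReal_exp]
    push_cast
    ring_nf
  have hfun : lineB a = fun R : ℝ => Complex.exp (-(π:ℂ) * I / 4) *
      ((∫ u in (0:ℝ)..R, Real.exp (-a * u ^ 2) : ℝ) : ℂ) := funext heq
  rw [hfun]
  exact ((Complex.continuous_ofReal.tendsto _).comp hre).const_mul _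

lemma tendsto_arc (a : ℝ) (ha : 0 < a) : Tendsto (arc a) atTop (nhds 0) := by
  have htends : Tendsto (fun R : ℝ => π / (4 * a * R)) atTop (nhds 0) := by
    apply Tendsto.div_atTop tendsto_const_nhds
    exact Tendsto.const_mul_atTop (by positivity) tendsto_id
  apply squeeze_zero_norm' _ htends
  filter_upwards [eventually_ge_atTop (1:ℝ)] with R hR
  have hR0 : 0 < R := lt_of_lt_of_le one_pos hR
  have hπ : -(π/4) ≤ (0:ℝ) := by nlinarith [Real.pi_pos]
  set c : ℝ := 4 * a * R ^ 2 / π with hc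
  have hc0 : 0 < c := by have := Real.pi_pos; positivity
  have hb1 : ∀ θ ∈ Set.Icc (-(π/4)) (0:ℝ), ‖FC a R θ‖ ≤ R * Real.exp (c * θ) := by
    intro θ hθ
    have hθl := hθ.1
    have hθr := hθ.2
    have hsin : Real.sin (2 * θ) ≤ 4 / π * θ := by
      have hj := Real.mul_le_sin (x := -(2*θ)) (by linarith) (by linarith)
      rw [Real.sin_neg] at hj
      have hπ0 := Real.pi_pos
      rw [div_mul_eq_mul_div, div_le_iff₀ hπ0] at hj
      rw [div_mul_eq_mul_div, le_div_iff₀ hπ0]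
      nlinarith
    have hre : (-I * a * (R:ℂ) ^ 2 * Complex.exp (2 * θ * I)).re
        = a * R ^ 2 * Real.sin (2 * θ) := by
      have key : -I * (a:ℂ) * (R:ℂ) ^ 2 * Complex.exp (2 * θ * I)
          = ((a * R ^ 2 * Real.sin (2 * θ) : ℝ) : ℂ)
            + ((-(a * R ^ 2 * Real.cos (2 * θ)) : ℝ) : ℂ) * I := by
        rw [show ((2:ℂ) * θ * I) = ((2 * θ : ℝ) : ℂ) * I by push_cast; ring,
          Complex.exp_mul_I, ← Complex.ofReal_cos, ← Complex.ofReal_sin]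
        push_cast
        ring_nf
        simp only [Complex.I_sq]
        ring
      rw [key]
      simp only [Complex.add_re, Complex.mul_re, Complex.ofReal_re, Complex.ofReal_im,
        Complex.I_re, Complex.I_im]
      ring
    have hnorm : ‖FC a R θ‖ = Real.exp (a * R ^ 2 * Real.sin (2 * θ)) * R := by
      have hz : ((θ:ℂ) * I).re = 0 := by simp
      unfold FC
      simp only [norm_mul, Complex.norm_exp, hre, hz, Real.exp_zero,
        mul_one, Complex.norm_I, Complex.norm_real, Real.norm_eq_abs, one_mul]
      rw [_root_.abs_of_nonneg hR0.le]
    rw [hnorm]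
    have h1 : Real.exp (a * R ^ 2 * Real.sin (2 * θ)) ≤ Real.exp (c * θ) := by
      apply Real.exp_le_exp.mpr
      rw [hc]
      have hπ0 := Real.pi_pos
      calc a * R ^ 2 * Real.sin (2 * θ) ≤ a * R ^ 2 * (4 / π * θ) := by
            apply mul_le_mul_of_nonneg_left hsin (by positivity)
        _ = 4 * a * R ^ 2 / π * θ := by field_simp
    calc Real.exp (a * R ^ 2 * Real.sin (2 * θ)) * R ≤ Real.exp (c * θ) * R :=
          mul_le_mul_of_nonneg_right h1 hR0.le
      _ = R * Real.exp (c * θ) := by ring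
  have hstep1 : ‖arc a R‖ ≤ ∫ θ in (-(π/4))..(0:ℝ), ‖FC a R θ‖ :=
    intervalIntegral.norm_integral_le_integral_norm hπ
  have hstep2 : (∫ θ in (-(π/4))..(0:ℝ), ‖FC a R θ‖)
      ≤ ∫ θ in (-(π/4))..(0:ℝ), R * Real.exp (c * θ) := by
    apply intervalIntegral.integral_mono_on hπ
    · exact ((contFC a R).norm).intervalIntegrable _ _
    · exact (Continuous.intervalIntegrable (by fun_prop) _ _)
    · exact hb1
  have hstep3 : (∫ θ in (-(π/4))..(0:ℝ), R * Real.exp (c * θ))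
      = R * ((1 - Real.exp (-(c * (π/4)))) / c) := by
    rw [intervalIntegral.integral_const_mul]
    congr 1
    have hder : ∀ θ ∈ Set.uIcc (-(π/4)) (0:ℝ),
        HasDerivAt (fun s : ℝ => Real.exp (c * s) / c) (Real.exp (c * θ)) θ := by
      intro θ _
      have hlin : HasDerivAt (fun s : ℝ => c * s) c θ := by
        simpa using (hasDerivAt_id θ).const_mul c
      have h := (Real.hasDerivAt_exp (c * θ)).comp θ hlin
      have h2 := h.div_const c
      simpa [mul_div_cancel_left₀, hc0.ne', mul_comm] using h2
    rw [intervalIntegral.integral_eq_sub_of_hasDerivAt hder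
      (Continuous.intervalIntegrable (by fun_prop) _ _)]
    rw [mul_zero, Real.exp_zero]
    rw [show c * (-(π/4)) = -(c * (π/4)) by ring]
    ring
  have hstep4 : R * ((1 - Real.exp (-(c * (π/4)))) / c) ≤ π / (4 * a * R) := by
    have hkey : R * ((1 - Real.exp (-(c * (π/4)))) / c) ≤ R * (1 / c) := by
      gcongr
      nlinarith [Real.exp_nonneg (-(c * (π/4)))]
    have heqc : R * (1 / c) = π / (4 * a * R) := by
      rw [hc]
      have hπ0 := Real.pi_pos
      field_simp
    linarith
  calc ‖arc a R‖ ≤ ∫ θ in (-(π/4))..(0:ℝ), ‖FC a R θ‖ := hstep1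
    _ ≤ ∫ θ in (-(π/4))..(0:ℝ), R * Real.exp (c * θ) := hstep2
    _ = R * ((1 - Real.exp (-(c * (π/4)))) / c) := hstep3
    _ ≤ π / (4 * a * R) := hstep4

lemma tendsto_lineA (a : ℝ) (ha : 0 < a) :
    Tendsto (lineA a) atTop
      (nhds (Complex.exp (-(π:ℂ) * I / 4) * ((Real.sqrt (π/a) / 2 : ℝ) : ℂ))) := by
  have h := (tendsto_lineB a ha).add (tendsto_arc a ha)
  rw [add_zero] at h
  apply h.congr
  intro R
  exact (lineA_eq a ha R).symm

end FresnelAux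

namespace FresnelAux

lemma intervalIntegral_conj (f : ℝ → ℂ) (a b : ℝ) :
    ∫ x in a..b, (starRingEnd ℂ) (f x) = (starRingEnd ℂ) (∫ x in a..b, f x) := by
  rw [intervalIntegral.intervalIntegral_eq_integral_uIoc,
    intervalIntegral.intervalIntegral_eq_integral_uIoc, integral_conj,
    Complex.real_smul, Complex.real_smul, map_mul, Complex.conj_ofReal]

lemma lineA_conj (a : ℝ) (R : ℝ) :
    (∫ u in (0:ℝ)..R, Complex.exp (I * a * (u:ℂ) ^ 2)) = (starRingEnd ℂ) (lineA a R) := by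
  unfold lineA
  rw [← intervalIntegral_conj]
  apply intervalIntegral.integral_congr
  intro u _
  show Complex.exp (I * a * (u:ℂ) ^ 2) = (starRingEnd ℂ) (FA a u)
  unfold FA
  rw [← Complex.exp_conj]
  congr 1
  simp [map_mul, map_pow, Complex.conj_ofReal]

lemma tendsto_lineA_conj (a : ℝ) (ha : 0 < a) :
    Tendsto (fun R : ℝ => ∫ u in (0:ℝ)..R, Complex.exp (I * a * (u:ℂ) ^ 2)) atTop
      (nhds (Complex.exp ((π:ℂ) * I / 4) * ((Real.sqrt (π/a) / 2 : ℝ) : ℂ))) := by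
  have hcont : Continuous (starRingEnd ℂ) := Complex.continuous_conj
  have h := (hcont.tendsto _).comp (tendsto_lineA a ha)
  have heq : (starRingEnd ℂ) (Complex.exp (-(π:ℂ) * I / 4) * ((Real.sqrt (π/a) / 2 : ℝ) : ℂ))
      = Complex.exp ((π:ℂ) * I / 4) * ((Real.sqrt (π/a) / 2 : ℝ) : ℂ) := by
    rw [map_mul, Complex.conj_ofReal, ← Complex.exp_conj]
    congr 1
    simp only [map_div₀, map_neg, map_mul, Complex.conj_I, Complex.conj_ofReal, map_ofNat]
    ring
  rw [heq] at h
  apply h.congr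
  intro R
  exact (lineA_conj a R).symm

lemma exp_pi_I_div_two : Complex.exp ((π:ℂ) * I / 2) = I := by
  rw [show ((π:ℂ) * I / 2) = ((π/2 : ℝ) : ℂ) * I by push_cast; ring,
    Complex.exp_mul_I, ← Complex.ofReal_cos, ← Complex.ofReal_sin]
  simp

lemma I_mul_exp_pi_I_div_four :
    I * Complex.exp ((π:ℂ) * I / 4) = -Complex.exp (-(π:ℂ) * I / 4) := by
  have h1 : I * Complex.exp ((π:ℂ) * I / 4) = Complex.exp ((π:ℂ) * I / 2 + (π:ℂ) * I / 4) := by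
    rw [Complex.exp_add, exp_pi_I_div_two]
  have h2 : -Complex.exp (-(π:ℂ) * I / 4)
      = Complex.exp ((π:ℂ) * I + -(π:ℂ) * I / 4) := by
    rw [Complex.exp_add, Complex.exp_pi_mul_I]; ring
  rw [h1, h2]
  congr 1
  ring

lemma I_mul_exp_neg_pi_I_div_four :
    I * Complex.exp (-(π:ℂ) * I / 4) = Complex.exp ((π:ℂ) * I / 4) := by
  have h1 : I * Complex.exp (-(π:ℂ) * I / 4) = Complex.exp ((π:ℂ) * I / 2 + -(π:ℂ) * I / 4) := by
    rw [Complex.exp_add, exp_pi_I_div_two]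
  rw [h1]
  congr 1
  ring

lemma exp_sq : Complex.exp ((π:ℂ) * I / 4) ^ 2 = I := by
  rw [← Complex.exp_nat_mul, show ((2:ℕ):ℂ) * ((π:ℂ) * I / 4) = (π:ℂ) * I / 2 by push_cast; ring,
    exp_pi_I_div_two]

lemma exp_pow4 : Complex.exp ((π:ℂ) * I / 4) ^ 4 = -1 := by
  rw [← Complex.exp_nat_mul, show ((4:ℕ):ℂ) * ((π:ℂ) * I / 4) = (π:ℂ) * I by push_cast; ring,
    Complex.exp_pi_mul_I]

lemma subst_sq (g : ℝ → ℂ) (hg : Continuous g) (R : ℝ) :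
    (∫ r in (0:ℝ)..R, (r:ℂ) * g (r ^ 2)) = (1/2 : ℂ) * ∫ u in (0:ℝ)..R ^ 2, g u := by
  have h := intervalIntegral.integral_comp_smul_deriv (a := (0:ℝ)) (b := R)
    (f := fun r : ℝ => r ^ 2) (f' := fun r : ℝ => 2 * r) (g := g)
    (fun x _ => by simpa using hasDerivAt_pow 2 x) (by fun_prop) hg
  simp only [Function.comp] at h
  have h2 : (∫ r in (0:ℝ)..R, (2 * r : ℝ) • g (r ^ 2))
      = ∫ r in (0:ℝ)..R, 2 * ((r:ℂ) * g (r ^ 2)) := by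
    apply intervalIntegral.integral_congr
    intro r _
    show (2 * r : ℝ) • g (r ^ 2) = 2 * ((r:ℂ) * g (r ^ 2))
    rw [Complex.real_smul]
    push_cast
    ring
  rw [h2, intervalIntegral.integral_const_mul] at h
  rw [show ((0:ℝ) ^ 2) = 0 by norm_num] at h
  rw [← h]
  ring

end FresnelAux

namespace FresnelAux

/-- the combined integrand after substitution `u = r²`. -/
def hInt (t : ℝ) (u : ℝ) : ℂ :=
  Complex.exp (-2 * I * (u:ℂ) ^ 2 * t) - I * Complex.exp (2 * I * (u:ℂ) ^ 2 * t)

lemma cont_hInt (t : ℝ) : Continuous (hInt t) := by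
  unfold hInt; fun_prop

lemma integrand_eq (t r : ℝ) :
    ((r:ℂ) * Complex.exp (-2 * I * (r:ℂ) ^ 4 * (t:ℂ))
      - Complex.exp ((π:ℝ) * I / 4) *
        (((r:ℂ) * Complex.exp ((π:ℝ) * I / 4)) *
          Complex.exp (-2 * I * ((r:ℂ) * Complex.exp ((π:ℝ) * I / 4)) ^ 4 * (t:ℂ))))
    = (r:ℂ) * hInt t (r ^ 2) := by
  unfold hInt
  rw [show (-2 * I * ((r:ℂ) * Complex.exp ((π:ℝ) * I / 4)) ^ 4 * (t:ℂ))
      = 2 * I * (r:ℂ) ^ 4 * t by rw [mul_pow, exp_pow4]; ring]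
  rw [show ((((r:ℝ) ^ 2 : ℝ) : ℂ) ^ 2) = (r:ℂ) ^ 4 by push_cast; ring]
  have hsq := exp_sq
  linear_combination (-(r:ℂ) * Complex.exp (2 * I * (r:ℂ) ^ 4 * (t:ℂ))) * hsq

lemma gammaTrunc_eq (t : ℝ) (R : ℝ) :
    gammaTrunc (fun k => k * Complex.exp (-2 * I * k ^ 4 * (t:ℂ))) R
      = (1/2 : ℂ) * ∫ u in (0:ℝ)..R ^ 2, hInt t u := by
  unfold gammaTrunc
  rw [intervalIntegral.integral_congr (g := fun r : ℝ => (r:ℂ) * hInt t (r ^ 2))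
    (fun r _ => integrand_eq t r)]
  exact subst_sq (hInt t) (cont_hInt t) R

lemma hInt_integral_pos (t : ℝ) (S : ℝ) :
    (∫ u in (0:ℝ)..S, hInt t u)
      = lineA (2*t) S - I * ∫ u in (0:ℝ)..S, Complex.exp (I * ((2*t : ℝ):ℂ) * (u:ℂ) ^ 2) := by
  unfold hInt lineA
  rw [intervalIntegral.integral_sub (Continuous.intervalIntegrable (by fun_prop) _ _)
    (Continuous.intervalIntegrable (by fun_prop) _ _),
    intervalIntegral.integral_const_mul]
  congr 1
  · apply intervalIntegral.integral_congr
    intro u _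
    show Complex.exp (-2 * I * (u:ℂ) ^ 2 * t) = FA (2*t) u
    unfold FA
    congr 1
    push_cast
    ring
  · congr 1
    apply intervalIntegral.integral_congr
    intro u _
    show Complex.exp (2 * I * (u:ℂ) ^ 2 * t) = Complex.exp (I * ((2*t : ℝ):ℂ) * (u:ℂ) ^ 2)
    congr 1
    push_cast
    ring

lemma hInt_integral_neg (t : ℝ) (S : ℝ) :
    (∫ u in (0:ℝ)..S, hInt t u)
      = (∫ u in (0:ℝ)..S, Complex.exp (I * ((-2*t : ℝ):ℂ) * (u:ℂ) ^ 2)) - I * lineA (-2*t) S := by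
  unfold hInt lineA
  rw [intervalIntegral.integral_sub (Continuous.intervalIntegrable (by fun_prop) _ _)
    (Continuous.intervalIntegrable (by fun_prop) _ _),
    intervalIntegral.integral_const_mul]
  congr 1
  · apply intervalIntegral.integral_congr
    intro u _
    show Complex.exp (-2 * I * (u:ℂ) ^ 2 * t) = Complex.exp (I * ((-2*t : ℝ):ℂ) * (u:ℂ) ^ 2)
    congr 1
    push_cast
    ring
  · congr 1
    apply intervalIntegral.integral_congr
    intro u _
    show Complex.exp (2 * I * (u:ℂ) ^ 2 * t) = FA (-2*t) u
    unfold FA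
    congr 1
    push_cast
    ring

end FresnelAux
end

open FresnelAux in
/-- For `t > 0`, `∫_γ k e^{-2ik⁴t} dk = c₁/√t`; for `t < 0` it equals `0`. -/
theorem gamma_ke_integral (t : ℝ) :
    (0 < t →
      Tendsto (fun R => gammaTrunc (fun k => k * Complex.exp (-2 * Complex.I * k ^ 4 * (t : ℂ))) R)
        atTop (nhds (c1 / (Real.sqrt t : ℂ)))) ∧
    (t < 0 →
      Tendsto (fun R => gammaTrunc (fun k => k * Complex.exp (-2 * Complex.I * k ^ 4 * (t : ℂ))) R)
        atTop (nhds 0)) := by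
  have hsqtop : Tendsto (fun R : ℝ => R ^ 2) atTop atTop := tendsto_pow_atTop two_ne_zero
  constructor
  · intro ht
    have h2t : (0:ℝ) < 2 * t := by linarith
    have hA := tendsto_lineA (2*t) h2t
    have hB := tendsto_lineA_conj (2*t) h2t
    have hcomb := (hA.sub (hB.const_mul I)).const_mul (1/2 : ℂ)
    have hfinal := hcomb.comp hsqtop
    have hfun : (fun R : ℝ =>
        gammaTrunc (fun k => k * Complex.exp (-2 * Complex.I * k ^ 4 * (t : ℂ))) R)
        = (fun S : ℝ => (1/2:ℂ) * (lineA (2*t) S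
            - I * ∫ u in (0:ℝ)..S, Complex.exp (I * ((2*t : ℝ):ℂ) * (u:ℂ) ^ 2)))
          ∘ (fun R : ℝ => R ^ 2) := by
      funext R
      simp only [Function.comp]
      rw [gammaTrunc_eq, hInt_integral_pos]
    have hval : (1/2:ℂ) * (Complex.exp (-(π:ℂ) * I / 4) * ((Real.sqrt (π/(2*t)) / 2 : ℝ) : ℂ)
        - I * (Complex.exp ((π:ℂ) * I / 4) * ((Real.sqrt (π/(2*t)) / 2 : ℝ) : ℂ)))
        = c1 / ((Real.sqrt t : ℝ) : ℂ) := by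
      have hIE := I_mul_exp_pi_I_div_four
      have hc : (Real.sqrt (π/(2*t)) : ℝ) = Real.sqrt π / (Real.sqrt 2 * Real.sqrt t) := by
        rw [Real.sqrt_div Real.pi_pos.le, Real.sqrt_mul (by norm_num : (0:ℝ) ≤ 2)]
      have h2ne : ((Real.sqrt 2 : ℝ) : ℂ) ≠ 0 := by
        exact_mod_cast (Real.sqrt_ne_zero'.mpr two_pos)
      have htne : ((Real.sqrt t : ℝ) : ℂ) ≠ 0 := by
        exact_mod_cast (Real.sqrt_ne_zero'.mpr ht)
      unfold c1
      rw [hc]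
      push_cast
      linear_combination (-(1/4:ℂ) * ((Real.sqrt π : ℂ) / ((Real.sqrt 2 : ℂ) * (Real.sqrt t : ℂ)))) * hIE
    rw [hfun, ← hval]
    exact hfinal
  · intro ht
    have h2t : (0:ℝ) < -2 * t := by linarith
    have hA := tendsto_lineA (-2*t) h2t
    have hB := tendsto_lineA_conj (-2*t) h2t
    have hcomb := (hB.sub (hA.const_mul I)).const_mul (1/2 : ℂ)
    have hfinal := hcomb.comp hsqtop
    have hfun : (fun R : ℝ =>
        gammaTrunc (fun k => k * Complex.exp (-2 * Complex.I * k ^ 4 * (t : ℂ))) R)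
        = (fun S : ℝ => (1/2:ℂ) * ((∫ u in (0:ℝ)..S, Complex.exp (I * ((-2*t : ℝ):ℂ) * (u:ℂ) ^ 2))
            - I * lineA (-2*t) S))
          ∘ (fun R : ℝ => R ^ 2) := by
      funext R
      simp only [Function.comp]
      rw [gammaTrunc_eq, hInt_integral_neg]
    have hval : (1/2:ℂ) * (Complex.exp ((π:ℂ) * I / 4) * ((Real.sqrt (π/(-2*t)) / 2 : ℝ) : ℂ)
        - I * (Complex.exp (-(π:ℂ) * I / 4) * ((Real.sqrt (π/(-2*t)) / 2 : ℝ) : ℂ)))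
        = 0 := by
      have hIE := I_mul_exp_neg_pi_I_div_four
      linear_combination (-(1/2:ℂ) * ((Real.sqrt (π/(-2*t)) / 2 : ℝ) : ℂ)) * hIE
    rw [hfun, ← hval]
    exact hfinal
end

section
/- Suppose b(k)/a(k) = -iq₀(0)/(2k) + O(1/k³) as k → ∞ in D₁ ∪ D₂, with b/a analytic on the contour γ' (a deformation of γ avoiding zeros of a) and at infinity within the closure of D₁. Then f₀(0) := ∫_{γ'} (b(k)/a(k)) dk = -π q₀(0)/8. -/
open Filter MeasureTheory Set Complex intervalIntegral

namespace F0Aux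

def S : Set ℂ := {k : ℂ | 0 ≤ k.arg ∧ k.arg ≤ Real.pi / 4}

noncomputable def E : ℂ := Complex.exp ((Real.pi / 4 : ℝ) * Complex.I)

lemma E_eq : Complex.exp (Real.pi * Complex.I / 4) = E := by
  unfold E; congr 1; push_cast; ring

lemma norm_E : ‖E‖ = 1 := by
  simp [E, Complex.norm_exp]

lemma mem_S_exp {r y : ℝ} (hr : 0 ≤ r) (hy0 : 0 ≤ y) (hy : y ≤ Real.pi / 4) :
    (r : ℂ) * Complex.exp ((y : ℂ) * Complex.I) ∈ S := by
  have hπ := Real.pi_pos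
  rcases eq_or_lt_of_le hr with h | h
  · simp [S, ← h, Complex.arg_zero, le_of_lt (by positivity : (0:ℝ) < Real.pi / 4)]
  · have harg : ((r : ℂ) * Complex.exp ((y : ℂ) * Complex.I)).arg = y := by
      rw [Complex.arg_real_mul _ h, Complex.exp_mul_I,
        Complex.arg_cos_add_sin_mul_I ⟨by linarith, by linarith⟩]
    exact ⟨by rw [harg]; exact hy0, by rw [harg]; exact hy⟩

lemma mem_S_ofReal {r : ℝ} (hr : 0 ≤ r) : (r : ℂ) ∈ S := by
  have hπ := Real.pi_pos
  exact ⟨by rw [Complex.arg_ofReal_of_nonneg hr],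
    by rw [Complex.arg_ofReal_of_nonneg hr]; positivity⟩

lemma mem_S_mul_E {r : ℝ} (hr : 0 ≤ r) : (r : ℂ) * E ∈ S :=
  mem_S_exp hr (le_of_lt (by positivity)) le_rfl

variable {h : ℂ → ℂ}

lemma cont_ray1 (hanal : DifferentiableOn ℂ h S) :
    ContinuousOn (fun r : ℝ => h r) (Ici 0) :=
  hanal.continuousOn.comp Complex.continuous_ofReal.continuousOn
    (fun r hr => mem_S_ofReal hr)

lemma cont_ray2 (hanal : DifferentiableOn ℂ h S) :
    ContinuousOn (fun r : ℝ => h ((r : ℂ) * E)) (Ici 0) :=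
  hanal.continuousOn.comp
    ((Complex.continuous_ofReal.mul continuous_const).continuousOn)
    (fun r hr => mem_S_mul_E hr)

/-- The arc integral `∫_{arc of radius ρ} h(k) dk` (with the `i` from `dk = i ρ e^{iy} dy`). -/
noncomputable def Arc (h : ℂ → ℂ) (ρ : ℝ) : ℂ :=
  Complex.I * ∫ y in (0:ℝ)..(Real.pi / 4),
    h ((ρ : ℂ) * Complex.exp ((y : ℂ) * Complex.I)) *
      ((ρ : ℂ) * Complex.exp ((y : ℂ) * Complex.I))

lemma rect_identity (hanal : DifferentiableOn ℂ h S) {ε R : ℝ} (hε : 0 < ε) (hεR : ε ≤ R) :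
    (∫ r in ε..R, (h r - E * h ((r : ℂ) * E))) = Arc h ε - Arc h R := by
  have hR : 0 < R := lt_of_lt_of_le hε hεR
  set a := Real.log ε with ha
  set b := Real.log R with hb
  have hab : a ≤ b := Real.log_le_log hε hεR
  set H : ℂ → ℂ := fun w => h (Complex.exp w) * Complex.exp w with hH
  have hπ4 : (0:ℝ) ≤ Real.pi / 4 := by positivity
  -- the rectangle maps into the sector
  have hmaps : MapsTo Complex.exp (Set.uIcc a b ×ℂ Set.uIcc (0:ℝ) (Real.pi/4)) S := by
    intro w hw
    rw [Complex.mem_reProdIm] at hw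
    have him : w.im ∈ Icc (0:ℝ) (Real.pi/4) := by
      rw [Set.uIcc_of_le hπ4] at hw
      exact hw.2
    have : Complex.exp w = (Real.exp w.re : ℂ) * Complex.exp ((w.im : ℂ) * Complex.I) := by
      rw [Complex.ofReal_exp, ← Complex.exp_add, Complex.re_add_im]
    rw [this]
    exact mem_S_exp (Real.exp_pos _).le him.1 him.2
  have hdiffH : DifferentiableOn ℂ H (Set.uIcc a b ×ℂ Set.uIcc (0:ℝ) (Real.pi/4)) :=
    (hanal.comp Complex.differentiable_exp.differentiableOn hmaps).mul
      Complex.differentiable_exp.differentiableOn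
  have hrect := Complex.integral_boundary_rect_eq_zero_of_differentiableOn H
    (a : ℂ) ((b : ℂ) + (Real.pi/4 : ℝ) * Complex.I)
    (by
      simpa [Complex.add_re, Complex.add_im, Complex.ofReal_re, Complex.ofReal_im,
        Complex.mul_re, Complex.mul_im, Complex.I_re, Complex.I_im] using hdiffH)
  simp only [Complex.add_re, Complex.add_im, Complex.ofReal_re, Complex.ofReal_im,
    Complex.mul_re, Complex.mul_im, Complex.I_re, Complex.I_im, mul_zero, mul_one,
    zero_mul, sub_zero, zero_add, add_zero, zero_sub, Complex.ofReal_zero, neg_zero] at hrect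
  have hexpa : Real.exp a = ε := Real.exp_log hε
  have hexpb : Real.exp b = R := Real.exp_log hR
  have hder : ∀ x ∈ Set.uIcc a b, HasDerivAt Real.exp (Real.exp x) x :=
    fun x _ => Real.hasDerivAt_exp x
  have himg : Real.exp '' Set.uIcc a b ⊆ Ici (0:ℝ) := by
    rintro _ ⟨x, _, rfl⟩; exact (Real.exp_pos x).le
  have eq1 : (∫ x in a..b, H x) = ∫ r in ε..R, h r := by
    calc (∫ x in a..b, H x)
        = ∫ x in a..b, Real.exp x • ((fun u : ℝ => h u) ∘ Real.exp) x := by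
          refine intervalIntegral.integral_congr fun x _ => ?_
          simp only [H, Function.comp, Complex.real_smul, ← Complex.ofReal_exp]
          ring
      _ = ∫ u in Real.exp a..Real.exp b, h u :=
          intervalIntegral.integral_comp_smul_deriv' hder
            Real.continuous_exp.continuousOn ((cont_ray1 hanal).mono himg)
      _ = ∫ r in ε..R, h r := by rw [hexpa, hexpb]
  have eq2 : (∫ x in a..b, H (x + (Real.pi/4 : ℝ) * Complex.I))
      = ∫ r in ε..R, h ((r : ℂ) * E) * E := by
    calc (∫ x in a..b, H (x + (Real.pi/4 : ℝ) * Complex.I))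
        = ∫ x in a..b, Real.exp x • ((fun u : ℝ => h ((u : ℂ) * E) * E) ∘ Real.exp) x := by
          refine intervalIntegral.integral_congr fun x _ => ?_
          simp only [H, Function.comp, Complex.exp_add, Complex.real_smul,
            ← Complex.ofReal_exp, E]
          ring
      _ = ∫ u in Real.exp a..Real.exp b, h ((u : ℂ) * E) * E :=
          intervalIntegral.integral_comp_smul_deriv' hder
            Real.continuous_exp.continuousOn
            (((cont_ray2 hanal).mul continuousOn_const).mono himg)
      _ = ∫ r in ε..R, h ((r : ℂ) * E) * E := by rw [hexpa, hexpb]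
  have eq3 : (I • ∫ y in (0:ℝ)..(Real.pi/4), H ((b : ℂ) + (y : ℂ) * Complex.I)) = Arc h R := by
    rw [smul_eq_mul, Arc]
    congr 1
    refine intervalIntegral.integral_congr fun y _ => ?_
    simp only [H, Complex.exp_add, ← Complex.ofReal_exp, hexpb]
  have eq4 : (I • ∫ y in (0:ℝ)..(Real.pi/4), H ((a : ℂ) + (y : ℂ) * Complex.I)) = Arc h ε := by
    rw [smul_eq_mul, Arc]
    congr 1
    refine intervalIntegral.integral_congr fun y _ => ?_
    simp only [H, Complex.exp_add, ← Complex.ofReal_exp, hexpa]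
  rw [eq1, eq2, eq3, eq4] at hrect
  have hsub : Set.uIcc ε R ⊆ Ici (0:ℝ) := by
    rw [Set.uIcc_of_le hεR]; exact fun x hx => le_trans hε.le hx.1
  have hi1 : IntervalIntegrable (fun r : ℝ => h r) volume ε R :=
    ((cont_ray1 hanal).mono hsub).intervalIntegrable
  have hi2 : IntervalIntegrable (fun r : ℝ => E * h ((r : ℂ) * E)) volume ε R :=
    ((continuousOn_const.mul (cont_ray2 hanal)).mono hsub).intervalIntegrable
  rw [intervalIntegral.integral_sub hi1 hi2]
  have : (∫ r in ε..R, E * h ((r : ℂ) * E)) = ∫ r in ε..R, h ((r : ℂ) * E) * E :=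
    intervalIntegral.integral_congr fun r _ => mul_comm _ _
  rw [this]
  linear_combination hrect


lemma norm_exp_yI (y : ℝ) : ‖Complex.exp ((y : ℂ) * Complex.I)‖ = 1 := by
  simp [Complex.norm_exp]

lemma bound_near_zero (hanal : DifferentiableOn ℂ h S) :
    ∃ δ > (0:ℝ), ∃ K ≥ (0:ℝ), ∀ k ∈ S, ‖k‖ < δ → ‖h k‖ ≤ K := by
  have h0S : (0:ℂ) ∈ S := mem_S_ofReal le_rfl
  have hc : ContinuousWithinAt h S 0 := hanal.continuousOn.continuousWithinAt h0S
  rw [Metric.continuousWithinAt_iff] at hc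
  obtain ⟨δ, hδ, hball⟩ := hc 1 one_pos
  refine ⟨δ, hδ, ‖h 0‖ + 1, by positivity, fun k hk hnorm => ?_⟩
  have h2 := hball hk (by simpa [dist_eq_norm] using hnorm)
  rw [dist_eq_norm] at h2
  calc ‖h k‖ = ‖h k - h 0 + h 0‖ := by ring_nf
    _ ≤ ‖h k - h 0‖ + ‖h 0‖ := norm_add_le _ _
    _ ≤ ‖h 0‖ + 1 := by linarith

lemma tendsto_linear_zero (c : ℝ) :
    Tendsto (fun ε : ℝ => c * ε) (nhdsWithin 0 (Ioi 0)) (nhds 0) := by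
  have : Tendsto (fun ε : ℝ => c * ε) (nhds 0) (nhds 0) := by
    simpa using ((continuous_mul_left c).tendsto (0:ℝ))
  exact this.mono_left nhdsWithin_le_nhds

lemma arc_tendsto_zero (hanal : DifferentiableOn ℂ h S) :
    Tendsto (fun ε => Arc h ε) (nhdsWithin 0 (Ioi 0)) (nhds 0) := by
  obtain ⟨δ, hδ, K, hK, hbd⟩ := bound_near_zero hanal
  have hπ4 : (0:ℝ) < Real.pi / 4 := by positivity
  apply squeeze_zero_norm' (a := fun ε : ℝ => K * Real.pi / 4 * ε)
  · filter_upwards [Ioo_mem_nhdsGT_of_mem (Set.mem_Ico.2 ⟨le_refl (0:ℝ), hδ⟩)] with ε hε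
    have hε0 : 0 < ε := hε.1
    have hεδ : ε < δ := hε.2
    have hbound : ∀ y ∈ Set.uIoc (0:ℝ) (Real.pi/4),
        ‖h ((ε : ℂ) * Complex.exp ((y : ℂ) * Complex.I)) *
          ((ε : ℂ) * Complex.exp ((y : ℂ) * Complex.I))‖ ≤ K * ε := by
      intro y hy
      rw [Set.mem_uIoc] at hy
      have hy' : 0 ≤ y ∧ y ≤ Real.pi / 4 := by
        rcases hy with hy | hy
        · exact ⟨hy.1.le, hy.2⟩
        · exact absurd hy.1 (by linarith)
      have hmem := mem_S_exp hε0.le hy'.1 hy'.2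
      have hnorm : ‖(ε : ℂ) * Complex.exp ((y : ℂ) * Complex.I)‖ = ε := by
        rw [norm_mul, norm_exp_yI, mul_one, Complex.norm_real, Real.norm_eq_abs,
          abs_of_pos hε0]
      rw [norm_mul, hnorm]
      exact mul_le_mul_of_nonneg_right (hbd _ hmem (by rw [hnorm]; exact hεδ)) hε0.le
    calc ‖Arc h ε‖ = ‖∫ y in (0:ℝ)..(Real.pi/4),
          h ((ε : ℂ) * Complex.exp ((y : ℂ) * Complex.I)) *
            ((ε : ℂ) * Complex.exp ((y : ℂ) * Complex.I))‖ := by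
              rw [Arc, norm_mul, Complex.norm_I, one_mul]
      _ ≤ K * ε * |Real.pi / 4 - 0| :=
        intervalIntegral.norm_integral_le_of_norm_le_const hbound
      _ = K * Real.pi / 4 * ε := by
        rw [sub_zero, abs_of_pos hπ4]; ring
  · exact tendsto_linear_zero _


lemma gamma_eq (hanal : DifferentiableOn ℂ h S) {R : ℝ} (hR : 0 < R) :
    gammaTrunc h R = - Arc h R := by
  obtain ⟨δ, hδ, K, hK, hbd⟩ := bound_near_zero hanal
  set φ : ℝ → ℂ := fun r => h r - E * h ((r : ℂ) * E) with hφ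
  have hφc : ContinuousOn φ (Ici 0) :=
    (cont_ray1 hanal).sub (continuousOn_const.mul (cont_ray2 hanal))
  have hgt : gammaTrunc h R = ∫ r in (0:ℝ)..R, φ r := by
    simp only [gammaTrunc, E_eq, hφ]
  have hint : ∀ {u v : ℝ}, 0 ≤ u → 0 ≤ v → IntervalIntegrable φ volume u v := by
    intro u v hu hv
    apply (hφc.mono ?_).intervalIntegrable
    intro x hx
    rcases le_total u v with huv | huv
    · rw [Set.uIcc_of_le huv] at hx; exact le_trans hu hx.1
    · rw [Set.uIcc_of_ge huv] at hx; exact le_trans hv hx.1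
  have hsmall : Tendsto (fun ε => ∫ r in (0:ℝ)..ε, φ r) (nhdsWithin 0 (Ioi 0)) (nhds 0) := by
    apply squeeze_zero_norm' (a := fun ε : ℝ => 2 * K * ε)
    · filter_upwards [Ioo_mem_nhdsGT_of_mem (Set.mem_Ico.2 ⟨le_refl (0:ℝ), hδ⟩)] with ε hε
      have hbound : ∀ r ∈ Set.uIoc (0:ℝ) ε, ‖φ r‖ ≤ 2 * K := by
        intro r hr
        rw [Set.mem_uIoc] at hr
        have hr' : 0 < r ∧ r < δ := by
          rcases hr with hr | hr
          · exact ⟨hr.1, lt_of_le_of_lt hr.2 hε.2⟩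
          · exact absurd hr.1 (by linarith [hε.1])
        have hn1 : ‖(r : ℂ)‖ = r := by
          rw [Complex.norm_real, Real.norm_eq_abs, abs_of_pos hr'.1]
        have h1 : ‖h r‖ ≤ K := hbd _ (mem_S_ofReal hr'.1.le) (by rw [hn1]; exact hr'.2)
        have h2 : ‖h ((r:ℂ) * E)‖ ≤ K := hbd _ (mem_S_mul_E hr'.1.le)
          (by rw [norm_mul, norm_E, mul_one, hn1]; exact hr'.2)
        calc ‖φ r‖ ≤ ‖h r‖ + ‖E * h ((r:ℂ) * E)‖ := norm_sub_le _ _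
          _ = ‖h r‖ + ‖h ((r:ℂ) * E)‖ := by rw [norm_mul, norm_E, one_mul]
          _ ≤ 2 * K := by linarith
      calc ‖∫ r in (0:ℝ)..ε, φ r‖ ≤ 2 * K * |ε - 0| :=
            intervalIntegral.norm_integral_le_of_norm_le_const hbound
        _ = 2 * K * ε := by rw [sub_zero, abs_of_pos hε.1]
    · exact tendsto_linear_zero _
  have h1 : Tendsto (fun ε => ∫ r in ε..R, φ r) (nhdsWithin 0 (Ioi 0))
      (nhds (gammaTrunc h R)) := by
    have heq : ∀ᶠ ε in nhdsWithin 0 (Ioi 0),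
        (∫ r in (0:ℝ)..R, φ r) - (∫ r in (0:ℝ)..ε, φ r) = ∫ r in ε..R, φ r := by
      filter_upwards [self_mem_nhdsWithin] with ε hε
      have hε0 : (0:ℝ) < ε := hε
      rw [eq_comm, eq_sub_iff_add_eq, add_comm,
        intervalIntegral.integral_add_adjacent_intervals (hint le_rfl hε0.le)
          (hint hε0.le hR.le)]
    have := (tendsto_const_nhds.sub hsmall :
      Tendsto (fun ε => (∫ r in (0:ℝ)..R, φ r) - ∫ r in (0:ℝ)..ε, φ r)
        (nhdsWithin 0 (Ioi 0)) (nhds ((∫ r in (0:ℝ)..R, φ r) - 0)))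
    rw [sub_zero] at this
    rw [hgt]
    exact this.congr' heq
  have h2 : Tendsto (fun ε => Arc h ε - Arc h R) (nhdsWithin 0 (Ioi 0))
      (nhds (0 - Arc h R)) := (arc_tendsto_zero hanal).sub tendsto_const_nhds
  have heq2 : (fun ε => ∫ r in ε..R, φ r) =ᶠ[nhdsWithin 0 (Ioi 0)]
      (fun ε => Arc h ε - Arc h R) := by
    filter_upwards [Ioo_mem_nhdsGT_of_mem (Set.mem_Ico.2 ⟨le_refl (0:ℝ), hR⟩)] with ε hε
    exact rect_identity hanal hε.1 hε.2.le
  have := tendsto_nhds_unique (h1.congr' heq2) h2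
  rwa [zero_sub] at this

end F0Aux

/-- If `h = b/a` is analytic in the closed sector `0 ≤ arg k ≤ π/4` and satisfies
`h(k) = -i q₀(0)/(2k) + O(1/k³)` there as `k → ∞`, then
`f₀(0) = ∫_{γ'} h(k) dk = -π q₀(0)/8`. -/
theorem f0_at_zero (h : ℂ → ℂ) (q00 : ℂ)
    (hanal : DifferentiableOn ℂ h {k : ℂ | 0 ≤ k.arg ∧ k.arg ≤ Real.pi / 4})
    (hdecay : ∃ C M : ℝ, ∀ k : ℂ, M ≤ ‖k‖ → 0 ≤ k.arg → k.arg ≤ Real.pi / 4 →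
      ‖h k + Complex.I * q00 / (2 * k)‖ ≤ C / ‖k‖ ^ 3) :
    Tendsto (fun R => gammaTrunc h R) atTop (nhds (-(Real.pi * q00 / 8))) := by
  obtain ⟨C, M, hCM⟩ := hdecay
  set C' : ℝ := max C 0 with hC'def
  have hC'0 : (0:ℝ) ≤ C' := le_max_right _ _
  have hanal' : DifferentiableOn ℂ h F0Aux.S := hanal
  have hπ4 : (0:ℝ) < Real.pi / 4 := by positivity
  rw [← tendsto_sub_nhds_zero_iff]
  apply squeeze_zero_norm' (a := fun R : ℝ => Real.pi / 4 * C' / R)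
  · filter_upwards [eventually_ge_atTop (max M 1)] with R hRge
    have hR1 : (1:ℝ) ≤ R := le_trans (le_max_right _ _) hRge
    have hRM : M ≤ R := le_trans (le_max_left _ _) hRge
    have hR0 : (0:ℝ) < R := lt_of_lt_of_le one_pos hR1
    set k : ℝ → ℂ := fun y => (R : ℂ) * Complex.exp ((y : ℂ) * Complex.I) with hk
    have hknorm : ∀ y, ‖k y‖ = R := by
      intro y
      rw [hk, norm_mul, F0Aux.norm_exp_yI, mul_one, Complex.norm_real, Real.norm_eq_abs,
        abs_of_pos hR0]
    have hkne : ∀ y, k y ≠ 0 := by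
      intro y hy
      have := hknorm y
      rw [hy, norm_zero] at this
      exact absurd this.symm (ne_of_gt hR0)
    -- split the integral
    have hcont : ContinuousOn (fun y : ℝ => h (k y) * k y) (Set.uIcc 0 (Real.pi / 4)) := by
      have hkc : Continuous k :=
        continuous_const.mul (Complex.continuous_exp.comp
          (Complex.continuous_ofReal.mul continuous_const))
      have hmaps : ∀ y ∈ Set.uIcc (0:ℝ) (Real.pi/4), k y ∈ F0Aux.S := by
        intro y hy
        rw [Set.uIcc_of_le hπ4.le] at hy
        exact F0Aux.mem_S_exp hR0.le hy.1 hy.2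
      exact ((hanal'.continuousOn.comp hkc.continuousOn hmaps).mul hkc.continuousOn)
    have hintg : IntervalIntegrable (fun y : ℝ => h (k y) * k y) volume 0 (Real.pi/4) :=
      hcont.intervalIntegrable
    have hptwise : ∀ y : ℝ, (h (k y) + Complex.I * q00 / (2 * k y)) * k y
        = h (k y) * k y + Complex.I * q00 / 2 := by
      intro y
      have := hkne y
      field_simp
    have hsplit : (∫ y in (0:ℝ)..(Real.pi/4), (h (k y) + Complex.I * q00 / (2 * k y)) * k y)
        = (∫ y in (0:ℝ)..(Real.pi/4), h (k y) * k y)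
          + ((Real.pi/4 : ℝ) : ℂ) * (Complex.I * q00 / 2) := by
      rw [intervalIntegral.integral_congr (fun y _ => hptwise y),
        intervalIntegral.integral_add hintg intervalIntegrable_const,
        intervalIntegral.integral_const]
      congr 1
      rw [sub_zero, Complex.real_smul]
    have hgamma : gammaTrunc h R - (-(Real.pi * q00 / 8))
        = -Complex.I * ∫ y in (0:ℝ)..(Real.pi/4),
            (h (k y) + Complex.I * q00 / (2 * k y)) * k y := by
      rw [F0Aux.gamma_eq hanal' hR0, F0Aux.Arc, hsplit]
      push_cast
      linear_combination ((Real.pi : ℂ) / 8 * q00) * Complex.I_sq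
    rw [hgamma]
    have hbound : ∀ y ∈ Set.uIoc (0:ℝ) (Real.pi/4),
        ‖(h (k y) + Complex.I * q00 / (2 * k y)) * k y‖ ≤ C' / R ^ 2 := by
      intro y hy
      rw [Set.mem_uIoc] at hy
      have hy' : 0 ≤ y ∧ y ≤ Real.pi / 4 := by
        rcases hy with hy | hy
        · exact ⟨hy.1.le, hy.2⟩
        · exact absurd hy.1 (by linarith)
      have hmem := F0Aux.mem_S_exp hR0.le hy'.1 hy'.2
      have hdec := hCM (k y) (by rw [hknorm]; exact hRM) hmem.1 hmem.2
      rw [hknorm] at hdec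
      have hCC' : C / R ^ 3 ≤ C' / R ^ 3 :=
        (div_le_div_iff_of_pos_right (by positivity)).mpr (le_max_left _ _)
      have hstep : C' / R ^ 3 * R = C' / R ^ 2 := by
        field_simp
      calc ‖(h (k y) + Complex.I * q00 / (2 * k y)) * k y‖
          = ‖h (k y) + Complex.I * q00 / (2 * k y)‖ * R := by rw [norm_mul, hknorm]
        _ ≤ C' / R ^ 3 * R :=
            mul_le_mul_of_nonneg_right (le_trans hdec hCC') hR0.le
        _ = C' / R ^ 2 := hstep
    calc ‖-Complex.I * ∫ y in (0:ℝ)..(Real.pi/4),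
          (h (k y) + Complex.I * q00 / (2 * k y)) * k y‖
        = ‖∫ y in (0:ℝ)..(Real.pi/4), (h (k y) + Complex.I * q00 / (2 * k y)) * k y‖ := by
          rw [norm_mul, norm_neg, Complex.norm_I, one_mul]
      _ ≤ C' / R ^ 2 * |Real.pi / 4 - 0| :=
          intervalIntegral.norm_integral_le_of_norm_le_const hbound
      _ ≤ Real.pi / 4 * C' / R := by
          rw [sub_zero, abs_of_pos hπ4]
          have h1 : C' / R ^ 2 ≤ C' / R :=
            div_le_div_of_nonneg_left hC'0 hR0 (by nlinarith)
          calc C' / R ^ 2 * (Real.pi / 4) ≤ C' / R * (Real.pi / 4) :=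
                mul_le_mul_of_nonneg_right h1 hπ4.le
            _ = Real.pi / 4 * C' / R := by ring
  · exact Tendsto.div_atTop tendsto_const_nhds tendsto_id
end
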